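/- Retrodicting an X-basis measurement with the Z-ensemble belief: let S be a qubit, |±⟩ = (|0⟩±|1⟩)/√2, E_{+/−} the CPTP map from S to a two-dimensional classical system T given by E_{+/−}(ρ) = ⟨+|ρ|+⟩ |+̃⟩⟨+̃| + ⟨−|ρ|−⟩ |−̃⟩⟨−̃| (where {|+̃⟩,|−̃⟩} is the standard basis of T), and let β₁ = (1/2)|0⟩⟨0|⊗|0̃⟩⟨0̃| + (1/2)|1⟩⟨1|⊗|1̃⟩⟨1̃| be the belief on S⊗R₁ corresponding to the ensemble {|0⟩,|1⟩} with equal weights. Then R_ext^{E_{+/−},β₁}(|+̃⟩⟨+̃|) = 1_S/2 and R_ext^{E_{+/−},β₁}(|−̃⟩⟨−̃|) = 1_S/2. -/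

import Mathlib

open Matrix
open scoped Kronecker ComplexOrder


open Classical in
/-- The positive semidefinite square root of a matrix (zero if not PSD). -/
noncomputable def msqrt {n : Type*} [Fintype n] [DecidableEq n] (A : Matrix n n ℂ) :
    Matrix n n ℂ :=
  if h : A.PosSemidef then (h.1.eigenvectorUnitary : Matrix n n ℂ) *
      diagonal ((↑) ∘ Real.sqrt ∘ h.1.eigenvalues) * (star h.1.eigenvectorUnitary : Matrix n n ℂ)
    else 0

/-- `A^{-1/2}`: the (nonsingular) inverse of the PSD square root. -/
noncomputable def invsqrt {n : Type*} [Fintype n] [DecidableEq n] (A : Matrix n n ℂ) :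
    Matrix n n ℂ :=
  (msqrt A)⁻¹

/-- Partial trace over the second factor `R`. -/
noncomputable def ptraceR {S R : Type*} [Fintype R] (M : Matrix (S × R) (S × R) ℂ) : Matrix S S ℂ :=
  Matrix.of fun s s' => ∑ r, M (s, r) (s', r)

/-- A density matrix: positive semidefinite with unit trace. -/
def IsDensity {n : Type*} [Fintype n] (A : Matrix n n ℂ) : Prop :=
  A.PosSemidef ∧ A.trace = 1

/-- The Choi matrix of a linear map between matrix algebras. -/
def choi {S T : Type*} [Fintype S] [DecidableEq S]
    (E : Matrix S S ℂ →ₗ[ℂ] Matrix T T ℂ) : Matrix (S × T) (S × T) ℂ :=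
  Matrix.of fun p q => E (Matrix.single p.1 q.1 1) p.2 q.2

/-- Completely positive trace-preserving map. -/
def IsCPTP {S T : Type*} [Fintype S] [DecidableEq S] [Fintype T]
    (E : Matrix S S ℂ →ₗ[ℂ] Matrix T T ℂ) : Prop :=
  (∀ X, (E X).trace = X.trace) ∧ (choi E).PosSemidef

/-- The Hilbert-Schmidt adjoint `E†`, satisfying `Tr[E(X)† Y] = Tr[X† E†(Y)]`. -/
noncomputable def adjMap {S T : Type*} [Fintype S] [DecidableEq S] [Fintype T]
    (E : Matrix S S ℂ →ₗ[ℂ] Matrix T T ℂ) (Y : Matrix T T ℂ) : Matrix S S ℂ :=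
  Matrix.of fun i j => ((E (Matrix.single i j 1))ᴴ * Y).trace

/-- The original Petz map `R^{E,βS}(σ) = √βS E†(E(βS)^{-1/2} σ E(βS)^{-1/2}) √βS`. -/
noncomputable def petz {S T : Type*} [Fintype S] [DecidableEq S] [Fintype T] [DecidableEq T]
    (E : Matrix S S ℂ →ₗ[ℂ] Matrix T T ℂ) (βS : Matrix S S ℂ) (σ : Matrix T T ℂ) :
    Matrix S S ℂ :=
  msqrt βS * adjMap E (invsqrt (E βS) * σ * invsqrt (E βS)) * msqrt βS

/-- The prior-extended Petz map `R^{E⊗Tr,β}`. -/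
noncomputable def petzExt {S R T : Type*} [Fintype S] [DecidableEq S]
    [Fintype R] [DecidableEq R] [Fintype T] [DecidableEq T]
    (E : Matrix S S ℂ →ₗ[ℂ] Matrix T T ℂ) (β : Matrix (S × R) (S × R) ℂ)
    (σ : Matrix T T ℂ) : Matrix (S × R) (S × R) ℂ :=
  msqrt β *
    (adjMap E (invsqrt (E (ptraceR β)) * σ * invsqrt (E (ptraceR β))) ⊗ₖ (1 : Matrix R R ℂ)) *
    msqrt β

/-- The retrodiction map `R_ext^{E,β} = Tr_R ∘ R^{E⊗Tr,β}`. -/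
noncomputable def retroExt {S R T : Type*} [Fintype S] [DecidableEq S]
    [Fintype R] [DecidableEq R] [Fintype T] [DecidableEq T]
    (E : Matrix S S ℂ →ₗ[ℂ] Matrix T T ℂ) (β : Matrix (S × R) (S × R) ℂ)
    (σ : Matrix T T ℂ) : Matrix S S ℂ :=
  ptraceR (petzExt E β σ)

/-- Two beliefs are equivalent if they induce the same retrodiction map for all channels. -/
def EquivBeliefs {S R₁ R₂ : Type*} [Fintype S] [DecidableEq S]
    [Fintype R₁] [DecidableEq R₁] [Fintype R₂] [DecidableEq R₂]
    (β : Matrix (S × R₁) (S × R₁) ℂ) (γ : Matrix (S × R₂) (S × R₂) ℂ) : Prop :=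
  ∀ (T : Type) (_ : Fintype T) (_ : DecidableEq T)
    (E : Matrix S S ℂ →ₗ[ℂ] Matrix T T ℂ),
    IsCPTP E → (E (ptraceR β)).PosDef → (E (ptraceR γ)).PosDef →
    ∀ σ : Matrix T T ℂ, retroExt E β σ = retroExt E γ σ

/-- Measurement in the basis `{v₀, v₁}`, recorded in the standard basis of a classical bit. -/
noncomputable def meas2 (v₀ v₁ : Fin 2 → ℂ) :
    Matrix (Fin 2) (Fin 2) ℂ →ₗ[ℂ] Matrix (Fin 2) (Fin 2) ℂ where
  toFun ρ := (∑ i, ∑ j, star (v₀ i) * ρ i j * v₀ j) • Matrix.single 0 0 1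
      + (∑ i, ∑ j, star (v₁ i) * ρ i j * v₁ j) • Matrix.single 1 1 1
  map_add' x y := by
    simp only [Matrix.add_apply, mul_add, add_mul, Finset.sum_add_distrib, add_smul]
    abel
  map_smul' c x := by
    have h : ∀ v : Fin 2 → ℂ,
        (∑ i, ∑ j, star (v i) * ((c • x) i j) * v j)
          = c * ∑ i, ∑ j, star (v i) * x i j * v j := by
      intro v
      rw [Finset.mul_sum]
      refine Finset.sum_congr rfl fun i _ => ?_
      rw [Finset.mul_sum]
      refine Finset.sum_congr rfl fun j _ => ?_
      simp only [Matrix.smul_apply, smul_eq_mul]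
      ring
    simp only [RingHom.id_apply, smul_add, smul_smul]
    rw [h, h]

/-- The qubit state `|0⟩`. -/
noncomputable def q0 : Fin 2 → ℂ := ![1, 0]
/-- The qubit state `|1⟩`. -/
noncomputable def q1 : Fin 2 → ℂ := ![0, 1]
/-- The qubit state `|+⟩ = (|0⟩+|1⟩)/√2`. -/
noncomputable def qP : Fin 2 → ℂ := ![(Real.sqrt 2 : ℂ)⁻¹, (Real.sqrt 2 : ℂ)⁻¹]
/-- The qubit state `|−⟩ = (|0⟩−|1⟩)/√2`. -/
noncomputable def qM : Fin 2 → ℂ := ![(Real.sqrt 2 : ℂ)⁻¹, -(Real.sqrt 2 : ℂ)⁻¹]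
/-- The qubit state `|+i⟩ = (|0⟩+i|1⟩)/√2`. -/
noncomputable def qPi : Fin 2 → ℂ := ![(Real.sqrt 2 : ℂ)⁻¹, Complex.I * (Real.sqrt 2 : ℂ)⁻¹]
/-- The qubit state `|−i⟩ = (|0⟩−i|1⟩)/√2`. -/
noncomputable def qMi : Fin 2 → ℂ := ![(Real.sqrt 2 : ℂ)⁻¹, -(Complex.I * (Real.sqrt 2 : ℂ)⁻¹)]
/-- The rank-one projector `|v⟩⟨v|`. -/
noncomputable def proj (v : Fin 2 → ℂ) : Matrix (Fin 2) (Fin 2) ℂ :=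
  Matrix.vecMulVec v (star v)


section Aux

open scoped MatrixOrder in
lemma msqrt_eq {n : Type*} [Fintype n] [DecidableEq n] {A B : Matrix n n ℂ}
    (hA : A.PosSemidef) (hB : B.PosSemidef) (h : B * B = A) :
    msqrt A = B := by
  rw [msqrt, dif_pos hA]
  have hs := CFC.sqrt_unique (a := A) (b := B) h hB.nonneg
  rw [← hs, CFC.sqrt_eq_real_sqrt A hA.nonneg, cfcₙ_eq_cfc, hA.1.cfc_eq, IsHermitian.cfc,
    Unitary.conjStarAlgAut_apply]
  rfl

noncomputable def sC : ℂ := (Real.sqrt 2 : ℂ)⁻¹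

lemma sC_mul_sC : sC * sC = 1 / 2 := by
  rw [sC, ← mul_inv, ← Complex.ofReal_mul, Real.mul_self_sqrt (by norm_num)]
  norm_num

lemma sC_nonneg : (0 : ℂ) ≤ sC := by
  rw [sC]
  have : ((Real.sqrt 2)⁻¹ : ℂ) = (((Real.sqrt 2)⁻¹ : ℝ) : ℂ) := by push_cast; ring
  rw [this]
  exact_mod_cast Complex.zero_le_real.mpr (by positivity)

lemma msqrt_half_one : msqrt ((1 / 2 : ℂ) • (1 : Matrix (Fin 2) (Fin 2) ℂ)) = sC • 1 := by
  have h1 : (1 / 2 : ℂ) • (1 : Matrix (Fin 2) (Fin 2) ℂ) = Matrix.diagonal (fun _ => (1/2 : ℂ)) := by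
    ext i j; by_cases h : i = j <;> simp [h, Matrix.one_apply, Matrix.diagonal]
  have h2 : sC • (1 : Matrix (Fin 2) (Fin 2) ℂ) = Matrix.diagonal (fun _ => sC) := by
    ext i j; by_cases h : i = j <;> simp [h, Matrix.one_apply, Matrix.diagonal]
  rw [h1, h2]
  refine msqrt_eq (Matrix.posSemidef_diagonal_iff.mpr fun _ => by
      rw [show (1/2 : ℂ) = ((1/2 : ℝ) : ℂ) by norm_num]
      exact Complex.zero_le_real.mpr (by norm_num))
    (Matrix.posSemidef_diagonal_iff.mpr fun _ => sC_nonneg) ?_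
  rw [Matrix.diagonal_mul_diagonal]
  simp only [sC_mul_sC]

lemma invsqrt_half_one :
    invsqrt ((1 / 2 : ℂ) • (1 : Matrix (Fin 2) (Fin 2) ℂ)) = (Real.sqrt 2 : ℂ) • 1 := by
  rw [invsqrt, msqrt_half_one]
  refine Matrix.inv_eq_right_inv ?_
  rw [smul_mul_smul_comm, one_mul, sC]
  rw [inv_mul_cancel₀ (by exact_mod_cast Real.sqrt_ne_zero'.mpr (by norm_num)), one_smul]

end Aux


noncomputable def betaZ : Matrix (Fin 2 × Fin 2) (Fin 2 × Fin 2) ℂ :=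
  (1 / 2 : ℂ) • (Matrix.single (0 : Fin 2) 0 (1 : ℂ)
      ⊗ₖ Matrix.single (0 : Fin 2) 0 (1 : ℂ))
    + (1 / 2 : ℂ) • (Matrix.single (1 : Fin 2) 1 (1 : ℂ)
      ⊗ₖ Matrix.single (1 : Fin 2) 1 (1 : ℂ))

lemma betaZ_diag : betaZ = Matrix.diagonal (fun p => if p.1 = p.2 then (1/2 : ℂ) else 0) := by
  ext ⟨i, j⟩ ⟨k, l⟩
  fin_cases i <;> fin_cases j <;> fin_cases k <;> fin_cases l <;>
    simp [betaZ, Matrix.single, Matrix.diagonal, Prod.ext_iff]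

lemma msqrt_betaZ :
    msqrt betaZ = Matrix.diagonal (fun p : Fin 2 × Fin 2 => if p.1 = p.2 then sC else 0) := by
  rw [betaZ_diag]
  refine msqrt_eq (Matrix.posSemidef_diagonal_iff.mpr fun p => ?_)
    (Matrix.posSemidef_diagonal_iff.mpr fun p => ?_) ?_
  · by_cases h : p.1 = p.2
    · rw [if_pos h, show (1/2 : ℂ) = ((1/2 : ℝ) : ℂ) by norm_num]
      exact Complex.zero_le_real.mpr (by norm_num)
    · rw [if_neg h]
  · by_cases h : p.1 = p.2
    · rw [if_pos h]; exact sC_nonneg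
    · rw [if_neg h]
  · rw [Matrix.diagonal_mul_diagonal]
    ext p q
    by_cases hpq : p = q
    · subst hpq
      by_cases h : p.1 = p.2 <;> simp [Matrix.diagonal_apply, h, sC_mul_sC]
    · simp [Matrix.diagonal_apply, hpq]

lemma ptraceR_betaZ : ptraceR betaZ = (1 / 2 : ℂ) • 1 := by
  ext i j
  fin_cases i <;> fin_cases j <;>
    simp [ptraceR, betaZ, Matrix.single, Fin.sum_univ_succ, Matrix.one_apply]

lemma meas2_half_one : meas2 qP qM ((1 / 2 : ℂ) • 1) = (1 / 2 : ℂ) • 1 := by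
  have h : ∀ v : Fin 2 → ℂ, (∑ i, ∑ j, star (v i) * (((1/2 : ℂ) • (1 : Matrix (Fin 2) (Fin 2) ℂ)) i j) * v j)
      = (1/2 : ℂ) * (star (v 0) * v 0 + star (v 1) * v 1) := by
    intro v
    simp [Fin.sum_univ_succ, Matrix.one_apply]
    ring
  simp only [meas2, LinearMap.coe_mk, AddHom.coe_mk]
  rw [h, h]
  have hP : star (qP 0) * qP 0 + star (qP 1) * qP 1 = 1 := by
    simp [qP, ← Complex.ofReal_inv]
    rw [← Complex.ofReal_mul, ← Real.sqrt_inv, Real.mul_self_sqrt (by norm_num)]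
    norm_num
  have hM : star (qM 0) * qM 0 + star (qM 1) * qM 1 = 1 := by
    simp [qM, ← Complex.ofReal_inv]
    rw [← Complex.ofReal_mul, ← Real.sqrt_inv, Real.mul_self_sqrt (by norm_num)]
    norm_num
  rw [hP, hM]
  ext i j
  fin_cases i <;> fin_cases j <;> simp [Matrix.single, Matrix.one_apply]


lemma sqrt2_mul_self : (Real.sqrt 2 : ℂ) * (Real.sqrt 2 : ℂ) = 2 := by
  rw [← Complex.ofReal_mul, Real.mul_self_sqrt (by norm_num)]
  norm_num

lemma scale_std (k : Fin 2) :
    ((Real.sqrt 2 : ℂ) • (1 : Matrix (Fin 2) (Fin 2) ℂ)) * Matrix.single k k (1 : ℂ) *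
      ((Real.sqrt 2 : ℂ) • (1 : Matrix (Fin 2) (Fin 2) ℂ))
      = (2 : ℂ) • Matrix.single k k (1 : ℂ) := by
  rw [smul_mul_assoc, one_mul, mul_smul_comm, mul_one, smul_smul, sqrt2_mul_self]

lemma adjE0 : adjMap (meas2 qP qM) ((2 : ℂ) • Matrix.single (0 : Fin 2) 0 (1 : ℂ))
    = Matrix.of ![![1, 1], ![1, 1]] := by
  ext i j
  fin_cases i <;> fin_cases j <;>
    · simp [adjMap, meas2, Matrix.trace, Matrix.mul_apply, Fin.sum_univ_succ,
        Matrix.single, qP, qM, Matrix.conjTranspose_apply, Matrix.diag,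
        Complex.ext_iff]
      norm_num [div_mul_div_comm, Real.mul_self_sqrt]

lemma adjE1 : adjMap (meas2 qP qM) ((2 : ℂ) • Matrix.single (1 : Fin 2) 1 (1 : ℂ))
    = Matrix.of ![![1, -1], ![-1, 1]] := by
  ext i j
  fin_cases i <;> fin_cases j <;>
    · simp [adjMap, meas2, Matrix.trace, Matrix.mul_apply, Fin.sum_univ_succ,
        Matrix.single, qP, qM, Matrix.conjTranspose_apply, Matrix.diag,
        Complex.ext_iff]
      norm_num [div_mul_div_comm, Real.mul_self_sqrt]

lemma key (A : Matrix (Fin 2) (Fin 2) ℂ) (h0 : A 0 0 = 1) (h1 : A 1 1 = 1) :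
    ptraceR (msqrt betaZ * (A ⊗ₖ (1 : Matrix (Fin 2) (Fin 2) ℂ)) * msqrt betaZ)
      = (1 / 2 : ℂ) • 1 := by
  rw [msqrt_betaZ]
  ext i j
  fin_cases i <;> fin_cases j <;>
    simp [ptraceR, Matrix.mul_apply, Matrix.diagonal_apply, Fin.sum_univ_succ,
      Fintype.sum_prod_type, Matrix.one_apply, Prod.ext_iff, h0, h1, sC_mul_sC]

/-- Retrodicting an X-basis measurement with the Z-ensemble
belief `β₁` returns the maximally mixed state for both outcomes. -/
theorem retro_measX_Z_ensemble :
    retroExt (meas2 qP qM)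
        ((1 / 2 : ℂ) • (Matrix.single (0 : Fin 2) 0 (1 : ℂ)
            ⊗ₖ Matrix.single (0 : Fin 2) 0 (1 : ℂ))
          + (1 / 2 : ℂ) • (Matrix.single (1 : Fin 2) 1 (1 : ℂ)
            ⊗ₖ Matrix.single (1 : Fin 2) 1 (1 : ℂ)))
        (Matrix.single (0 : Fin 2) 0 (1 : ℂ))
      = (1 / 2 : ℂ) • (1 : Matrix (Fin 2) (Fin 2) ℂ) ∧
    retroExt (meas2 qP qM)
        ((1 / 2 : ℂ) • (Matrix.single (0 : Fin 2) 0 (1 : ℂ)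
            ⊗ₖ Matrix.single (0 : Fin 2) 0 (1 : ℂ))
          + (1 / 2 : ℂ) • (Matrix.single (1 : Fin 2) 1 (1 : ℂ)
            ⊗ₖ Matrix.single (1 : Fin 2) 1 (1 : ℂ)))
        (Matrix.single (1 : Fin 2) 1 (1 : ℂ))
      = (1 / 2 : ℂ) • (1 : Matrix (Fin 2) (Fin 2) ℂ) := by
  constructor
  · show retroExt (meas2 qP qM) betaZ _ = _
    rw [retroExt, petzExt, ptraceR_betaZ, meas2_half_one, invsqrt_half_one, scale_std, adjE0]
    exact key _ (by norm_num [Matrix.of_apply]) (by norm_num [Matrix.of_apply])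
  · show retroExt (meas2 qP qM) betaZ _ = _
    rw [retroExt, petzExt, ptraceR_betaZ, meas2_half_one, invsqrt_half_one, scale_std, adjE1]
    exact key _ (by norm_num [Matrix.of_apply]) (by norm_num [Matrix.of_apply])
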